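/- Let d be a positive integer and let 0 ≤ β < α < 1. Let H be a probability distribution over the (finite) set of Boolean functions h : {-1,1}^d → {-1,1}, and for θ ∈ [0,1] let p_θ = Pr_{h∼H, (x,y) θ-correlated}[h(x) = h(y)]. Assume p_β < 1 and that H attains the minimum value, i.e., log(1/p_α)/log(1/p_β) = log(2/(1+α))/log(2/(1+β)). Then every function h assigned nonzero probability by H is a dictator function, i.e., of the form h(x) = x_i or h(x) = -x_i for some coordinate i. -/

import Mathlib

open Finset

noncomputable section

/-- Embedding of `Bool` into `{-1, 1} ⊆ ℝ`: `true ↦ 1`, `false ↦ -1`. -/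
def signVal (b : Bool) : ℝ := if b then 1 else -1

/-- The joint probability mass function of a randomly `θ`-correlated pair `(x, y)`:
`x` is uniform on the hypercube and each `y i` independently equals `x i` with
probability `(1 + θ)/2` and `-x i` (i.e. `!(x i)`) with probability `(1 - θ)/2`. -/
def corrPMF (d : ℕ) (θ : ℝ) (x y : Fin d → Bool) : ℝ :=
  (1 / 2 ^ d) * ∏ i, (if x i = y i then (1 + θ) / 2 else (1 - θ) / 2)

/-- The collision probability `Pr[h(x) = h(y)]` for a randomly `θ`-correlated pair. -/
def collProb (d : ℕ) (θ : ℝ) (h : (Fin d → Bool) → Bool) : ℝ :=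
  ∑ x, ∑ y, corrPMF d θ x y * (if h x = h y then 1 else 0)

/-- The collision probability `p_θ = Pr_{h ∼ H, (x,y) θ-corr}[h(x) = h(y)]` where `H` is a
probability mass function on Boolean functions. -/
def collProbH (d : ℕ) (θ : ℝ) (H : ((Fin d → Bool) → Bool) → ℝ) : ℝ :=
  ∑ h, H h * collProb d θ h

/-- The expectation `E[f(x) g(y)]` for a randomly `θ`-correlated pair `(x, y)`. -/
def corrExp (d : ℕ) (θ : ℝ) (f g : (Fin d → Bool) → ℝ) : ℝ :=
  ∑ x, ∑ y, corrPMF d θ x y * (f x * g y)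

/-- The Fourier coefficient `f̂(S) = E_x[f(x) ∏_{i ∈ S} x i]`. -/
def cubeFourierCoeff (d : ℕ) (f : (Fin d → Bool) → ℝ) (S : Finset (Fin d)) : ℝ :=
  (1 / 2 ^ d) * ∑ x, f x * ∏ i ∈ S, signVal (x i)

/-- The Fourier weight of `f` at degree `k`: `W^k[f] = ∑_{|S| = k} f̂(S)^2`. -/
def cubeFourierWeight (d : ℕ) (f : (Fin d → Bool) → ℝ) (k : ℕ) : ℝ :=
  ∑ S ∈ Finset.univ.filter (fun S : Finset (Fin d) => S.card = k), (cubeFourierCoeff d f S) ^ 2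



/-- ψ(u) = log(2/(1+e^{-u})) -/
def psi (u : ℝ) : ℝ := Real.log 2 - Real.log (1 + Real.exp (-u))

lemma one_add_exp_pos (u : ℝ) : (0:ℝ) < 1 + Real.exp (-u) := by positivity

lemma psi_zero : psi 0 = 0 := by
  simp [psi]
  norm_num

lemma psi_pos {u : ℝ} (hu : 0 < u) : 0 < psi u := by
  have h1 : Real.exp (-u) < 1 := by
    rw [Real.exp_lt_one_iff]; linarith
  have : Real.log (1 + Real.exp (-u)) < Real.log 2 :=
    Real.log_lt_log (one_add_exp_pos u) (by linarith)
  simp [psi]; linarith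

lemma hasDerivAt_psi (u : ℝ) :
    HasDerivAt psi (Real.exp (-u) / (1 + Real.exp (-u))) u := by
  have h1 : HasDerivAt (fun u : ℝ => Real.exp (-u)) (-Real.exp (-u)) u := by
    have := (Real.hasDerivAt_exp (-u)).comp u (hasDerivAt_neg u)
    simp only [mul_neg, mul_one] at this
    exact this
  have h2 : HasDerivAt (fun u : ℝ => 1 + Real.exp (-u)) (-Real.exp (-u)) u := by
    exact ((hasDerivAt_const u (1:ℝ)).add h1).congr_deriv (by ring)
  have h3 : HasDerivAt (fun u : ℝ => Real.log (1 + Real.exp (-u)))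
      (-Real.exp (-u) / (1 + Real.exp (-u))) u :=
    h2.log (ne_of_gt (one_add_exp_pos u))
  have h4 := (hasDerivAt_const u (Real.log 2)).sub h3
  exact h4.congr_deriv (by ring)

lemma psi_deriv_eq (u : ℝ) :
    Real.exp (-u) / (1 + Real.exp (-u)) = 1 / (Real.exp u + 1) := by
  rw [div_eq_div_iff (ne_of_gt (one_add_exp_pos u)) (by positivity)]
  rw [Real.exp_neg]
  have h := Real.exp_pos u
  field_simp

lemma psi_continuous : Continuous psi := by
  have : Differentiable ℝ psi := fun u => (hasDerivAt_psi u).differentiableAt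
  exact this.continuous

lemma psi_le_half {u : ℝ} (hu : 0 ≤ u) : psi u ≤ u / 2 := by
  set φ : ℝ → ℝ := fun u => u / 2 - psi u with hφ
  have hd : ∀ v : ℝ, HasDerivAt φ (1/2 - Real.exp (-v) / (1 + Real.exp (-v))) v := by
    intro v
    exact ((hasDerivAt_id v).div_const 2).sub (hasDerivAt_psi v)
  have hmono : MonotoneOn φ (Set.Ici (0:ℝ)) := by
    apply monotoneOn_of_deriv_nonneg (convex_Ici 0)
    · exact (((continuous_id.div_const 2).sub psi_continuous).continuousOn : ContinuousOn φ (Set.Ici (0:ℝ)))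
    · intro v _; exact (hd v).differentiableAt.differentiableWithinAt
    · intro v hv
      rw [(hd v).deriv]
      have h1 : Real.exp (-v) ≤ 1 := by
        rw [Real.exp_le_one_iff]
        simp at hv; linarith
      have h2 := one_add_exp_pos v
      rw [sub_nonneg, div_le_iff₀ h2]
      linarith
  have := hmono (Set.self_mem_Ici) (Set.mem_Ici.2 hu) hu
  simp [hφ, psi_zero] at this
  linarith

lemma gpos {u : ℝ} (hu : 0 < u) : 0 < 1 + (u - 1) * Real.exp u := by
  set g : ℝ → ℝ := fun u => 1 + (u - 1) * Real.exp u with hg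
  have hd : ∀ v : ℝ, HasDerivAt g (v * Real.exp v) v := by
    intro v
    have h1 : HasDerivAt (fun v : ℝ => (v - 1) * Real.exp v)
        (1 * Real.exp v + (v - 1) * Real.exp v) v :=
      (((hasDerivAt_id v).sub_const 1)).mul (Real.hasDerivAt_exp v)
    have h2 := (hasDerivAt_const v (1:ℝ)).add h1
    exact h2.congr_deriv (by ring)
  have hmono : StrictMonoOn g (Set.Ici (0:ℝ)) := by
    apply strictMonoOn_of_deriv_pos (convex_Ici 0)
    · exact (Continuous.continuousOn (by fun_prop))
    · intro v hv
      rw [interior_Ici] at hv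
      rw [(hd v).deriv]
      have := Real.exp_pos v
      exact mul_pos hv this
  have := hmono Set.self_mem_Ici (Set.mem_Ici.2 hu.le) hu
  simpa [hg] using this

/-- G(u) = u / ((e^u + 1) ψ(u)), strictly decreasing on (0,∞). -/
def Gfun (u : ℝ) : ℝ := u / ((Real.exp u + 1) * psi u)

lemma denom_pos {u : ℝ} (hu : 0 < u) : 0 < (Real.exp u + 1) * psi u :=
  mul_pos (by positivity) (psi_pos hu)

lemma hasDerivAt_denom (u : ℝ) :
    HasDerivAt (fun u => (Real.exp u + 1) * psi u)
      (Real.exp u * psi u + (Real.exp u + 1) * (Real.exp (-u) / (1 + Real.exp (-u)))) u :=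
  (((Real.hasDerivAt_exp u).add_const 1)).mul (hasDerivAt_psi u)

lemma denom_deriv_eq (u : ℝ) :
    Real.exp u * psi u + (Real.exp u + 1) * (Real.exp (-u) / (1 + Real.exp (-u)))
      = Real.exp u * psi u + 1 := by
  congr 1
  rw [psi_deriv_eq]
  have h : Real.exp u + 1 > 0 := by positivity
  field_simp

lemma Gfun_strictAnti : StrictAntiOn Gfun (Set.Ioi (0:ℝ)) := by
  apply strictAntiOn_of_deriv_neg (convex_Ioi 0)
  · apply ContinuousOn.div continuousOn_id
    · exact (((Real.continuous_exp.add continuous_const).mul psi_continuous)).continuousOn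
    · intro u hu; exact ne_of_gt (denom_pos hu)
  · intro u hu
    rw [interior_Ioi] at hu
    have hD := (hasDerivAt_denom u)
    rw [denom_deriv_eq] at hD
    have hG : HasDerivAt Gfun
        ((1 * ((Real.exp u + 1) * psi u) - u * (Real.exp u * psi u + 1))
          / ((Real.exp u + 1) * psi u)^2) u :=
      (hasDerivAt_id u).div hD (ne_of_gt (denom_pos hu))
    rw [hG.deriv]
    apply div_neg_of_neg_of_pos
    · -- numerator: (e^u+1)ψ - u e^u ψ - u = ψ(e^u+1-u e^u) - u < 0
      have hupos : (0:ℝ) < u := hu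
      have key : psi u * (Real.exp u + 1 - u * Real.exp u) < u := by
        by_cases hc : Real.exp u + 1 - u * Real.exp u ≤ 0
        · have := psi_pos hu
          exact lt_of_le_of_lt (mul_nonpos_of_nonneg_of_nonpos this.le hc) hupos
        · push_neg at hc
          have h1 : psi u * (Real.exp u + 1 - u * Real.exp u)
              ≤ u / 2 * (Real.exp u + 1 - u * Real.exp u) :=
            mul_le_mul_of_nonneg_right (psi_le_half hu.le) hc.le
          have h2 : Real.exp u + 1 - u * Real.exp u < 2 := by
            have := gpos hu
            nlinarith
          calc psi u * (Real.exp u + 1 - u * Real.exp u)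
              ≤ u / 2 * (Real.exp u + 1 - u * Real.exp u) := h1
            _ < u / 2 * 2 := by
                apply mul_lt_mul_of_pos_left h2 (by linarith [hupos])
            _ = u := by ring
      nlinarith [key]
    · exact pow_pos (denom_pos hu) 2

/-- Φ = log ∘ ψ -/
def Phi (u : ℝ) : ℝ := Real.log (psi u)

lemma hasDerivAt_Phi {u : ℝ} (hu : 0 < u) :
    HasDerivAt Phi (Gfun u / u) u := by
  have h := (hasDerivAt_psi u).log (ne_of_gt (psi_pos hu))
  have : Real.exp (-u) / (1 + Real.exp (-u)) / psi u = Gfun u / u := by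
    rw [psi_deriv_eq, Gfun]
    conv_rhs => rw [div_div, mul_comm ((Real.exp u + 1) * psi u) u, ← div_div,
      div_self (ne_of_gt hu)]
    rw [div_div]
  rwa [this] at h

lemma Phi_sub_strictAnti (k : ℝ) (hk : 2 ≤ k) :
    StrictAntiOn (fun v => Phi (k * v) - Phi v) (Set.Ioi (0:ℝ)) := by
  have hΦcont : ContinuousOn Phi (Set.Ioi (0:ℝ)) := by
    intro u hu
    exact ((hasDerivAt_Phi hu).differentiableAt.continuousAt).continuousWithinAt
  apply strictAntiOn_of_deriv_neg (convex_Ioi 0)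
  · apply ContinuousOn.sub
    · apply hΦcont.comp (Continuous.continuousOn (by fun_prop))
      intro v hv
      have : (0:ℝ) < v := hv
      exact Set.mem_Ioi.2 (by nlinarith)
    · exact hΦcont
  · intro v hv
    rw [interior_Ioi] at hv
    have hv' : (0:ℝ) < v := hv
    have hkv : v < k * v := by nlinarith
    have hkv' : 0 < k * v := by linarith
    have h1 : HasDerivAt (fun v => Phi (k * v)) (Gfun (k * v) / (k * v) * k) v := by
      have := (hasDerivAt_Phi hkv').comp v ((hasDerivAt_id v).const_mul k)
      simp only [mul_one] at this
      exact this
    have h2 := h1.sub (hasDerivAt_Phi hv')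
    rw [show (fun v => Phi (k * v) - Phi v) = (fun v => Phi (k * v)) - Phi from rfl, h2.deriv]
    have hG := Gfun_strictAnti (Set.mem_Ioi.2 hv') (Set.mem_Ioi.2 hkv') hkv
    have e1 : Gfun (k * v) / (k * v) * k = Gfun (k * v) / v := by
      field_simp
    rw [e1]
    rw [sub_neg, div_lt_div_iff_of_pos_right hv']
    exact hG

lemma key_strict {k : ℝ} (hk : 2 ≤ k) {a b : ℝ} (ha : 0 < a) (hab : a < b) :
    psi a * psi (k * b) < psi (k * a) * psi b := by
  have hb : 0 < b := lt_trans ha hab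
  have h := Phi_sub_strictAnti k hk (Set.mem_Ioi.2 ha) (Set.mem_Ioi.2 hb) hab
  simp only at h
  -- h : Phi (k*b) - Phi b < Phi (k*a) - Phi a
  have h2 : Phi (k * b) + Phi a < Phi (k * a) + Phi b := by linarith
  have hka : 0 < k * a := by nlinarith
  have hkb : 0 < k * b := by nlinarith
  have := Real.exp_lt_exp.2 h2
  rwa [Real.exp_add, Real.exp_add, Phi, Phi, Phi, Phi,
    Real.exp_log (psi_pos hka), Real.exp_log (psi_pos hkb),
    Real.exp_log (psi_pos ha), Real.exp_log (psi_pos hb), mul_comm (psi (k*b))] at this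

lemma log_two_div_eq_psi {θ : ℝ} (h0 : 0 < θ) :
    Real.log (2 / (1 + θ)) = psi (-Real.log θ) := by
  rw [psi, neg_neg, Real.exp_log h0, Real.log_div (by norm_num) (by positivity)]

lemma log_two_div_pow_eq_psi {θ : ℝ} (h0 : 0 < θ) (k : ℕ) :
    Real.log (2 / (1 + θ ^ k)) = psi ((k : ℝ) * (-Real.log θ)) := by
  rw [psi, mul_neg, neg_neg, Real.exp_nat_mul, Real.exp_log h0,
    Real.log_div (by norm_num) (by positivity)]

/-- The strict pointwise inequality for `k ≥ 2`:
`log(2/(1+α)) * log(2/(1+β^k)) < log(2/(1+α^k)) * log(2/(1+β))`. -/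
lemma F_strict {k : ℕ} (hk : 2 ≤ k) {α β : ℝ} (hβ0 : 0 ≤ β) (hβα : β < α) (hα : α < 1) :
    Real.log (2 / (1 + α)) * Real.log (2 / (1 + β ^ k))
      < Real.log (2 / (1 + α ^ k)) * Real.log (2 / (1 + β)) := by
  have hα0 : 0 < α := lt_of_le_of_lt hβ0 hβα
  rcases eq_or_lt_of_le hβ0 with hβz | hβpos
  · -- β = 0
    subst hβz
    rw [zero_pow (by omega)]
    have hlog2 : (0:ℝ) < Real.log (2 / (1 + 0)) := by
      norm_num
      exact Real.log_pos (by norm_num)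
    apply mul_lt_mul_of_pos_right ?_ hlog2 |>.trans_eq rfl
    -- log(2/(1+α)) < log(2/(1+α^k))
    apply Real.log_lt_log (by positivity)
    have : α ^ k < α := by
      calc α ^ k ≤ α ^ 2 := pow_le_pow_of_le_one hα0.le hα.le hk
        _ < α := by nlinarith
    apply div_lt_div_of_pos_left (by norm_num) (by positivity) (by linarith)
  · -- β > 0
    set a := -Real.log α with ha
    set b := -Real.log β with hb
    have hapos : 0 < a := by
      rw [ha, neg_pos]
      exact Real.log_neg hα0 hα
    have hab : a < b := by
      rw [ha, hb, neg_lt_neg_iff]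
      exact Real.log_lt_log hβpos hβα
    have hkey := key_strict (k := (k:ℝ)) (by exact_mod_cast hk) hapos hab
    rw [log_two_div_eq_psi hα0, log_two_div_eq_psi hβpos,
      log_two_div_pow_eq_psi hα0 k, log_two_div_pow_eq_psi hβpos k]
    exact hkey

lemma F_le (k : ℕ) {α β : ℝ} (hβ0 : 0 ≤ β) (hβα : β < α) (hα : α < 1) :
    Real.log (2 / (1 + α)) * Real.log (2 / (1 + β ^ k))
      ≤ Real.log (2 / (1 + α ^ k)) * Real.log (2 / (1 + β)) := by
  match k with
  | 0 => norm_num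
  | 1 => rw [pow_one, pow_one]
  | (n+2) => exact (F_strict (by omega) hβ0 hβα hα).le

lemma exp_form {θ : ℝ} (h0 : 0 ≤ θ) :
    (1 + θ) / 2 = Real.exp (-Real.log (2 / (1 + θ))) := by
  rw [← Real.log_inv, Real.exp_log (by positivity), inv_div]

lemma Flog_pos {θ : ℝ} (h0 : 0 ≤ θ) (h1 : θ < 1) : 0 < Real.log (2 / (1 + θ)) :=
  Real.log_pos (by rw [lt_div_iff₀ (by linarith)]; linarith)

lemma pt_le (k : ℕ) {α β : ℝ} (hβ0 : 0 ≤ β) (hβα : β < α) (hα : α < 1) :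
    (1 + α ^ k) / 2
      ≤ ((1 + β ^ k) / 2) ^ (Real.log (2 / (1 + α)) / Real.log (2 / (1 + β))) := by
  have hα0 : 0 < α := lt_of_le_of_lt hβ0 hβα
  have hFβ : 0 < Real.log (2 / (1 + β)) := Flog_pos hβ0 (lt_trans hβα hα)
  rw [exp_form (pow_nonneg hβ0 k), exp_form (pow_nonneg hα0.le k), ← Real.exp_mul,
    Real.exp_le_exp, neg_mul, neg_le_neg_iff, mul_div_assoc', mul_comm,
    div_le_iff₀ hFβ]
  exact F_le k hβ0 hβα hα

lemma pt_lt {k : ℕ} (hk : 2 ≤ k) {α β : ℝ} (hβ0 : 0 ≤ β) (hβα : β < α) (hα : α < 1) :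
    (1 + α ^ k) / 2
      < ((1 + β ^ k) / 2) ^ (Real.log (2 / (1 + α)) / Real.log (2 / (1 + β))) := by
  have hα0 : 0 < α := lt_of_le_of_lt hβ0 hβα
  have hFβ : 0 < Real.log (2 / (1 + β)) := Flog_pos hβ0 (lt_trans hβα hα)
  rw [exp_form (pow_nonneg hβ0 k), exp_form (pow_nonneg hα0.le k), ← Real.exp_mul,
    Real.exp_lt_exp, neg_mul, neg_lt_neg_iff, mul_div_assoc', mul_comm,
    div_lt_iff₀ hFβ]
  exact F_strict hk hβ0 hβα hα

lemma pt_eq_one {α β : ℝ} (hβ0 : 0 ≤ β) (hβα : β < α) (hα : α < 1) :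
    (1 + α ^ 1) / 2
      = ((1 + β ^ 1) / 2) ^ (Real.log (2 / (1 + α)) / Real.log (2 / (1 + β))) := by
  have hα0 : 0 < α := lt_of_le_of_lt hβ0 hβα
  have hFβ : 0 < Real.log (2 / (1 + β)) := Flog_pos hβ0 (lt_trans hβα hα)
  rw [exp_form (pow_nonneg hβ0 1), exp_form (pow_nonneg hα0.le 1), ← Real.exp_mul]
  congr 1
  rw [pow_one, pow_one]
  field_simp


def chi (d : ℕ) (S : Finset (Fin d)) (x : Fin d → Bool) : ℝ := ∏ i ∈ S, signVal (x i)

def Fi (d : ℕ) (θ : ℝ) (S T : Finset (Fin d)) (i : Fin d) (a b : Bool) : ℝ :=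
  ((1:ℝ)/2) * (if a = b then (1+θ)/2 else (1-θ)/2) *
    ((if i ∈ S then signVal a else 1) * (if i ∈ T then signVal b else 1))

lemma Fi_sum (d : ℕ) (θ : ℝ) (S T : Finset (Fin d)) (i : Fin d) :
    ∑ a, ∑ b, Fi d θ S T i a b
      = if i ∈ S then (if i ∈ T then θ else 0) else (if i ∈ T then 0 else 1) := by
  by_cases hS : i ∈ S <;> by_cases hT : i ∈ T <;>
    simp [Fi, Fintype.sum_bool, hS, hT, signVal] <;> ring

lemma hstep (d : ℕ) (θ : ℝ) (S T : Finset (Fin d)) (x y : Fin d → Bool) :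
    corrPMF d θ x y * (chi d S x * chi d T y) = ∏ i, Fi d θ S T i (x i) (y i) := by
  have h1 : ((1:ℝ) / 2 ^ d) = ∏ _i : Fin d, ((1:ℝ)/2) := by
    simp [Finset.prod_const, one_div, inv_pow]
  have h2 : chi d S x = ∏ i, (if i ∈ S then signVal (x i) else 1) := by
    simpa [chi] using (Finset.prod_ite_mem univ S (fun i => signVal (x i))).symm
  have h3 : chi d T y = ∏ i, (if i ∈ T then signVal (y i) else 1) := by
    simpa [chi] using (Finset.prod_ite_mem univ T (fun i => signVal (y i))).symm
  rw [corrPMF, h1, h2, h3, ← Finset.prod_mul_distrib, ← Finset.prod_mul_distrib,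
    ← Finset.prod_mul_distrib]
  rfl

lemma kernel_eval (d : ℕ) (θ : ℝ) (S T : Finset (Fin d)) :
    ∑ x, ∑ y, corrPMF d θ x y * (chi d S x * chi d T y)
      = if S = T then θ ^ S.card else 0 := by
  have : ∀ x : Fin d → Bool, ∑ y, corrPMF d θ x y * (chi d S x * chi d T y)
      = ∏ i, ∑ b, Fi d θ S T i (x i) b := by
    intro x
    rw [Fintype.prod_sum fun i b => Fi d θ S T i (x i) b]
    exact Finset.sum_congr rfl fun y _ => hstep d θ S T x y
  rw [Finset.sum_congr rfl fun x _ => this x,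
    ← Fintype.prod_sum fun i a => ∑ b, Fi d θ S T i a b,
    Finset.prod_congr rfl fun i _ => Fi_sum d θ S T i]
  by_cases hST : S = T
  · subst hST
    simp only [if_pos rfl]
    have := Finset.prod_ite_mem univ S (fun _ => θ)
    rw [Finset.univ_inter, Finset.prod_const] at this
    rw [← this]
    apply Finset.prod_congr rfl
    intro i _
    by_cases h : i ∈ S <;> simp [h]
  · rw [if_neg hST]
    have : ∃ i, (i ∈ S ∧ i ∉ T) ∨ (i ∈ T ∧ i ∉ S) := by
      by_contra hc
      push_neg at hc
      exact hST (Finset.ext fun i => ⟨(hc i).1, (hc i).2⟩)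
    obtain ⟨i, hi⟩ := this
    apply Finset.prod_eq_zero (Finset.mem_univ i)
    rcases hi with ⟨h1, h2⟩ | ⟨h1, h2⟩ <;> simp [h1, h2]


lemma signVal_mul_self (a : Bool) : signVal a * signVal a = 1 := by
  cases a <;> simp [signVal]

lemma chi_orth (d : ℕ) (x y : Fin d → Bool) :
    ∑ S : Finset (Fin d), chi d S x * chi d S y = if x = y then (2:ℝ)^d else 0 := by
  have h1 : ∀ S : Finset (Fin d), chi d S x * chi d S y
      = ∏ i ∈ S, (signVal (x i) * signVal (y i)) := by
    intro S; rw [chi, chi, ← Finset.prod_mul_distrib]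
  rw [Finset.sum_congr rfl fun S _ => h1 S]
  have h2 := Fintype.prod_add (fun i => signVal (x i) * signVal (y i)) (fun _ => (1:ℝ))
  simp only [Finset.prod_const, one_pow, mul_one] at h2
  rw [← Finset.sum_congr rfl (fun S _ => rfl), ← h2]
  by_cases hxy : x = y
  · subst hxy
    rw [if_pos rfl]
    rw [Finset.prod_congr rfl (fun i _ => by rw [signVal_mul_self (x i)]), Finset.prod_const]
    norm_num
  · rw [if_neg hxy]
    obtain ⟨i, hi⟩ : ∃ i, x i ≠ y i := by
      by_contra hc; push_neg at hc; exact hxy (funext hc)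
    apply Finset.prod_eq_zero (Finset.mem_univ i)
    cases hx : x i <;> cases hy : y i <;> simp_all [signVal]

lemma fourier_inversion (d : ℕ) (f : (Fin d → Bool) → ℝ) (x : Fin d → Bool) :
    f x = ∑ S : Finset (Fin d), cubeFourierCoeff d f S * chi d S x := by
  have : ∀ S : Finset (Fin d), cubeFourierCoeff d f S * chi d S x
      = (1 / 2^d) * ∑ y, f y * (chi d S y * chi d S x) := by
    intro S
    rw [cubeFourierCoeff, mul_assoc, Finset.sum_mul]
    congr 1
    exact Finset.sum_congr rfl fun y _ => by simp only [chi]; ring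
  rw [Finset.sum_congr rfl fun S _ => this S, ← Finset.mul_sum, Finset.sum_comm]
  have : ∀ y, ∑ S : Finset (Fin d), f y * (chi d S y * chi d S x)
      = f y * (if y = x then (2:ℝ)^d else 0) := by
    intro y; rw [← Finset.mul_sum, chi_orth]
  rw [Finset.sum_congr rfl fun y _ => this y]
  simp only [mul_ite, mul_zero, Finset.sum_ite_eq', Finset.mem_univ, if_pos]
  field_simp


lemma sum4_comm {A B : Type*} [Fintype A] [Fintype B] (F : A → A → B → B → ℝ) :
    ∑ x : B, ∑ y : B, ∑ S : A, ∑ T : A, F S T x y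
      = ∑ S : A, ∑ T : A, ∑ x : B, ∑ y : B, F S T x y := by
  calc ∑ x : B, ∑ y : B, ∑ S : A, ∑ T : A, F S T x y
      = ∑ x : B, ∑ S : A, ∑ y : B, ∑ T : A, F S T x y :=
        Finset.sum_congr rfl fun x _ => Finset.sum_comm
    _ = ∑ S : A, ∑ x : B, ∑ y : B, ∑ T : A, F S T x y := Finset.sum_comm
    _ = ∑ S : A, ∑ x : B, ∑ T : A, ∑ y : B, F S T x y :=
        Finset.sum_congr rfl fun S _ => Finset.sum_congr rfl fun x _ => Finset.sum_comm
    _ = ∑ S : A, ∑ T : A, ∑ x : B, ∑ y : B, F S T x y :=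
        Finset.sum_congr rfl fun S _ => Finset.sum_comm

lemma corrExp_eq (d : ℕ) (θ : ℝ) (f : (Fin d → Bool) → ℝ) :
    corrExp d θ f f = ∑ S : Finset (Fin d), θ ^ S.card * (cubeFourierCoeff d f S) ^ 2 := by
  have key : ∀ x y : Fin d → Bool, corrPMF d θ x y * (f x * f y)
      = ∑ S : Finset (Fin d), ∑ T : Finset (Fin d),
          (cubeFourierCoeff d f S * cubeFourierCoeff d f T)
            * (corrPMF d θ x y * (chi d S x * chi d T y)) := by
    intro x y
    conv_lhs => rw [fourier_inversion d f x, fourier_inversion d f y]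
    rw [Finset.sum_mul_sum, Finset.mul_sum]
    refine Finset.sum_congr rfl fun S _ => ?_
    rw [Finset.mul_sum]
    exact Finset.sum_congr rfl fun T _ => by ring
  rw [corrExp]
  rw [Finset.sum_congr rfl fun x _ => Finset.sum_congr rfl fun y _ => key x y]
  rw [sum4_comm]
  have : ∀ S T : Finset (Fin d),
      ∑ x, ∑ y, (cubeFourierCoeff d f S * cubeFourierCoeff d f T)
          * (corrPMF d θ x y * (chi d S x * chi d T y))
        = (cubeFourierCoeff d f S * cubeFourierCoeff d f T)
            * (if S = T then θ ^ S.card else 0) := by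
    intro S T
    rw [← kernel_eval d θ S T, Finset.mul_sum]
    exact Finset.sum_congr rfl fun x _ => (Finset.mul_sum _ _ _).symm
  rw [Finset.sum_congr rfl fun S _ => Finset.sum_congr rfl fun T _ => this S T]
  refine Finset.sum_congr rfl fun S _ => ?_
  simp only [mul_ite, mul_zero, Finset.sum_ite_eq, Finset.mem_univ, if_pos]
  ring



lemma total_mass (d : ℕ) (θ : ℝ) : ∑ x : Fin d → Bool, ∑ y : Fin d → Bool, corrPMF d θ x y = 1 := by
  have := kernel_eval d θ ∅ ∅
  simp [chi] at this
  exact this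

lemma collProb_eq (d : ℕ) (θ : ℝ) (h : (Fin d → Bool) → Bool) :
    collProb d θ h = (1 + corrExp d θ (fun x => signVal (h x)) (fun x => signVal (h x))) / 2 := by
  have key : ∀ x y : Fin d → Bool, corrPMF d θ x y * (if h x = h y then (1:ℝ) else 0)
      = (corrPMF d θ x y + corrPMF d θ x y * (signVal (h x) * signVal (h y))) / 2 := by
    intro x y
    cases hx : h x <;> cases hy : h y <;> simp [hx, hy, signVal] <;> ring
  rw [collProb, Finset.sum_congr rfl fun x _ => Finset.sum_congr rfl fun y _ => key x y]
  rw [corrExp]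
  have e1 : ∀ x : Fin d → Bool,
      ∑ y, (corrPMF d θ x y + corrPMF d θ x y * (signVal (h x) * signVal (h y))) / 2
      = ((∑ y, corrPMF d θ x y) + ∑ y, corrPMF d θ x y * (signVal (h x) * signVal (h y))) / 2 := by
    intro x; rw [← Finset.sum_add_distrib, ← Finset.sum_div]
  rw [Finset.sum_congr rfl fun x _ => e1 x]
  rw [Finset.sum_congr rfl fun x _ => rfl, ← Finset.sum_div, Finset.sum_add_distrib,
    total_mass]

lemma parseval (d : ℕ) (h : (Fin d → Bool) → Bool) :
    ∑ S : Finset (Fin d), (cubeFourierCoeff d (fun x => signVal (h x)) S) ^ 2 = 1 := by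
  have h1 : collProb d 1 h = 1 := by
    have hpmf : ∀ x y : Fin d → Bool, corrPMF d 1 x y = if x = y then (1/2^d : ℝ) else 0 := by
      intro x y
      rw [corrPMF]
      by_cases hxy : x = y
      · subst hxy; simp
      · rw [if_neg hxy]
        obtain ⟨i, hi⟩ : ∃ i, x i ≠ y i := by
          by_contra hc; push_neg at hc; exact hxy (funext hc)
        have : ∏ i : Fin d, (if x i = y i then ((1:ℝ)+1)/2 else ((1:ℝ)-1)/2) = 0 :=
          Finset.prod_eq_zero (Finset.mem_univ i) (by simp [hi])
        rw [this, mul_zero]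
    rw [collProb, Finset.sum_congr rfl fun x _ => Finset.sum_congr rfl fun y _ => by
      rw [hpmf x y]]
    have e2 : ∀ x : Fin d → Bool,
        ∑ y, (if x = y then (1/2^d:ℝ) else 0) * (if h x = h y then 1 else 0) = 1/2^d := by
      intro x
      rw [Finset.sum_eq_single x]
      · simp
      · intro y _ hy
        rw [if_neg (fun hh => hy hh.symm), zero_mul]
      · intro hc; exact absurd (Finset.mem_univ x) hc
    rw [Finset.sum_congr rfl fun x _ => e2 x, Finset.sum_const, Finset.card_univ]
    simp [Fintype.card_fun]
  have h2 := collProb_eq d 1 h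
  rw [h1, corrExp_eq] at h2
  simp only [one_pow, one_mul] at h2
  linarith

lemma stab_group (d : ℕ) (θ : ℝ) (f : (Fin d → Bool) → ℝ) :
    ∑ S : Finset (Fin d), θ ^ S.card * (cubeFourierCoeff d f S) ^ 2
      = ∑ k ∈ Finset.range (d+1), θ ^ k * cubeFourierWeight d f k := by
  rw [← Finset.sum_fiberwise_of_maps_to (g := fun S : Finset (Fin d) => S.card)
    (t := Finset.range (d+1)) (fun S _ => Finset.mem_range.2 (Nat.lt_succ_of_le
      (le_trans (Finset.card_le_univ S) (by simp))))]
  refine Finset.sum_congr rfl fun k _ => ?_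
  rw [cubeFourierWeight, Finset.mul_sum]
  refine Finset.sum_congr rfl fun S hS => ?_
  rw [(Finset.mem_filter.1 hS).2]

lemma signVal_sq (b : Bool) : signVal b ^ 2 = 1 := by cases b <;> simp [signVal]

lemma filter_card_one (d : ℕ) :
    (Finset.univ.filter (fun S : Finset (Fin d) => S.card = 1))
      = Finset.univ.image (fun i : Fin d => ({i} : Finset (Fin d))) := by
  ext S
  simp only [Finset.mem_filter, Finset.mem_univ, true_and, Finset.mem_image]
  rw [Finset.card_eq_one]
  constructor
  · rintro ⟨a, rfl⟩
    exact ⟨a, rfl⟩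
  · rintro ⟨a, rfl⟩
    exact ⟨a, rfl⟩

lemma dictator_of_level_one (d : ℕ) (h : (Fin d → Bool) → Bool)
    (hvan : ∀ S : Finset (Fin d), S.card ≠ 1 →
      cubeFourierCoeff d (fun x => signVal (h x)) S = 0) :
    ∃ i : Fin d, (∀ x, h x = x i) ∨ (∀ x, h x = !(x i)) := by
  set f : (Fin d → Bool) → ℝ := fun x => signVal (h x) with hf
  set a : Fin d → ℝ := fun i => cubeFourierCoeff d f {i} with ha
  have hsing : Function.Injective (fun i : Fin d => ({i} : Finset (Fin d))) :=
    fun i j hij => Finset.singleton_injective hij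
  -- linear form
  have flin : ∀ x, f x = ∑ i, a i * signVal (x i) := by
    intro x
    rw [fourier_inversion d f x]
    rw [← Finset.sum_filter_of_ne (p := fun S : Finset (Fin d) => S.card = 1)
      (fun S _ hS => by
        by_contra hc
        exact hS (by rw [hvan S hc, zero_mul]))]
    rw [filter_card_one, Finset.sum_image (fun i _ j _ hij => hsing hij)]
    exact Finset.sum_congr rfl fun i _ => by rw [chi, Finset.prod_singleton]
  -- Parseval restricted
  have hW1 : ∑ i, (a i) ^ 2 = 1 := by
    have := parseval d h
    rw [← Finset.sum_filter_of_ne (p := fun S : Finset (Fin d) => S.card = 1)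
      (fun S _ hS => by
        by_contra hc
        exact hS (by rw [hvan S hc]; norm_num)) ] at this
    rw [filter_card_one, Finset.sum_image (fun i _ j _ hij => hsing hij)] at this
    exact this
  set A : ℝ := ∑ i, a i with hA
  have hA2 : A ^ 2 = 1 := by
    have h1 := flin (fun _ => true)
    simp [signVal] at h1
    rw [← hA] at h1
    rw [← h1, hf]
    exact signVal_sq _
  have haj : ∀ j, a j = 0 ∨ a j = A := by
    intro j
    have h1 := flin (Function.update (fun _ => true) j false)
    have h2 : ∀ i : Fin d, signVal (Function.update (fun _ => true) j false i)
        = if i = j then -1 else 1 := by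
      intro i
      rw [Function.update_apply]
      by_cases hij : i = j <;> simp [hij, signVal]
    rw [Finset.sum_congr rfl fun i _ => by rw [h2 i]] at h1
    have h3 : ∑ i, a i * (if i = j then (-1:ℝ) else 1) = A - 2 * a j := by
      rw [Finset.sum_congr rfl (fun i _ => show a i * (if i = j then (-1:ℝ) else 1)
        = a i - (if i = j then 2 * a i else 0) by by_cases hij : i = j <;> simp [hij] <;> ring)]
      rw [Finset.sum_sub_distrib, Finset.sum_ite_eq' Finset.univ j (fun i => 2 * a i)]
      simp [hA]
    rw [h3] at h1
    have h4 : (A - 2 * a j) ^ 2 = 1 := by rw [← h1, hf]; exact signVal_sq _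
    have h5 : a j * (a j - A) = 0 := by nlinarith
    rcases mul_eq_zero.1 h5 with h6 | h6
    · exact Or.inl h6
    · exact Or.inr (by linarith [sub_eq_zero.1 h6])
  -- the support of a
  set T := Finset.univ.filter (fun i => a i ≠ 0) with hT
  have hTsum : ∑ i ∈ T, (a i) ^ 2 = 1 := by
    rw [hT, Finset.sum_filter_of_ne (fun i _ hi => by
      intro hc; exact hi (by rw [hc]; norm_num))]
    exact hW1
  have hTcard : T.card = 1 := by
    have : ∑ i ∈ T, (a i) ^ 2 = T.card := by
      rw [Finset.sum_congr rfl (fun i hi => by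
        rcases haj i with h0 | hA'
        · exact absurd h0 (Finset.mem_filter.1 hi).2
        · rw [hA', hA2])]
      simp
    rw [this] at hTsum
    exact_mod_cast hTsum
  obtain ⟨i, hi⟩ := Finset.card_eq_one.1 hTcard
  have hai : a i = A := by
    have hmem : i ∈ T := hi ▸ Finset.mem_singleton_self i
    rcases haj i with h0 | hA'
    · exact absurd h0 (Finset.mem_filter.1 hmem).2
    · exact hA'
  have hzero : ∀ j, j ≠ i → a j = 0 := by
    intro j hj
    by_contra hc
    have : j ∈ T := Finset.mem_filter.2 ⟨Finset.mem_univ j, hc⟩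
    rw [hi, Finset.mem_singleton] at this
    exact hj this
  have hfA : ∀ x, f x = A * signVal (x i) := by
    intro x
    rw [flin x, Finset.sum_eq_single i (fun j _ hj => by rw [hzero j hj, zero_mul])
      (fun hc => absurd (Finset.mem_univ i) hc), hai]
  have signVal_inj : ∀ b c : Bool, signVal b = signVal c → b = c := by
    intro b c
    cases b <;> cases c <;> revert f <;> norm_num [signVal]
  rcases mul_self_eq_one_iff.1 (by nlinarith [hA2] : A * A = 1) with h1 | h1
  · refine ⟨i, Or.inl fun x => ?_⟩
    have hx := hfA x
    rw [h1, one_mul] at hx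
    exact signVal_inj _ _ hx
  · refine ⟨i, Or.inr fun x => ?_⟩
    have hx := hfA x
    rw [h1] at hx
    have hx2 : f x = signVal (!(x i)) := by
      rw [hx]; cases x i <;> simp [signVal]
    exact signVal_inj _ _ hx2

/-- if a probability distribution `H` over Boolean functions attains the
minimum value `log(1/p_α)/log(1/p_β) = log(2/(1+α))/log(2/(1+β))` for `0 ≤ β < α < 1`
with `p_β < 1`, then every function with nonzero probability under `H` is a
dictator function `h(x) = x_i` or `h(x) = -x_i`. -/
theorem boolean_lsh_optimum_is_dictator (d : ℕ) (hd : 0 < d) (α β : ℝ)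
    (hβ : 0 ≤ β) (hβα : β < α) (hα : α < 1)
    (H : ((Fin d → Bool) → Bool) → ℝ) (Hnonneg : ∀ h, 0 ≤ H h) (Hsum : ∑ h, H h = 1)
    (hpβ : collProbH d β H < 1)
    (hopt : Real.log (1 / collProbH d α H) / Real.log (1 / collProbH d β H) =
      Real.log (2 / (1 + α)) / Real.log (2 / (1 + β))) :
    ∀ h, H h ≠ 0 → ∃ i : Fin d, (∀ x, h x = x i) ∨ (∀ x, h x = !(x i)) := by
  classical
  set c : ℝ := Real.log (2 / (1 + α)) / Real.log (2 / (1 + β)) with hc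
  set w : ℕ → ℝ := fun k => ∑ g, H g * cubeFourierWeight d (fun x => signVal (g x)) k with hw
  have hα0 : 0 < α := lt_of_le_of_lt hβ hβα
  have weight_nonneg : ∀ (g : (Fin d → Bool) → Bool) (k : ℕ),
      0 ≤ cubeFourierWeight d (fun x => signVal (g x)) k :=
    fun g k => Finset.sum_nonneg fun S _ => sq_nonneg _
  have wnonneg : ∀ k, 0 ≤ w k :=
    fun k => Finset.sum_nonneg fun g _ => mul_nonneg (Hnonneg g) (weight_nonneg g k)
  have weight_sum : ∀ g : (Fin d → Bool) → Bool,
      ∑ k ∈ Finset.range (d+1), cubeFourierWeight d (fun x => signVal (g x)) k = 1 := by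
    intro g
    have h1 := stab_group d 1 (fun x => signVal (g x))
    simp only [one_pow, one_mul] at h1
    rw [← h1]
    exact parseval d g
  have wsum : ∑ k ∈ Finset.range (d+1), w k = 1 := by
    rw [hw, Finset.sum_comm]
    rw [Finset.sum_congr rfl fun g _ => by rw [← Finset.mul_sum, weight_sum g, mul_one]]
    exact Hsum
  have Pform : ∀ θ : ℝ, collProbH d θ H = ∑ k ∈ Finset.range (d+1), w k * ((1 + θ^k)/2) := by
    intro θ
    rw [collProbH]
    have hcp : ∀ g : (Fin d → Bool) → Bool, collProb d θ g = ∑ k ∈ Finset.range (d+1),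
        cubeFourierWeight d (fun x => signVal (g x)) k * ((1 + θ^k)/2) := by
      intro g
      rw [collProb_eq, corrExp_eq, stab_group]
      rw [Finset.sum_congr rfl (fun k _ =>
        show cubeFourierWeight d (fun x => signVal (g x)) k * ((1+θ^k)/2)
          = cubeFourierWeight d (fun x => signVal (g x)) k / 2
            + θ^k * cubeFourierWeight d (fun x => signVal (g x)) k / 2 by ring)]
      rw [Finset.sum_add_distrib, ← Finset.sum_div, weight_sum g]
      rw [Finset.sum_congr rfl (fun k _ =>
        show θ^k * cubeFourierWeight d (fun x => signVal (g x)) k / 2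
          = (θ^k * cubeFourierWeight d (fun x => signVal (g x)) k) / 2 by ring), ← Finset.sum_div]
      ring
    rw [Finset.sum_congr rfl fun g _ => by rw [hcp g, Finset.mul_sum]]
    rw [Finset.sum_comm]
    refine Finset.sum_congr rfl fun k _ => ?_
    rw [hw, Finset.sum_mul]
    exact Finset.sum_congr rfl fun g _ => by ring
  have Pge : ∀ θ : ℝ, 0 ≤ θ → 1/2 ≤ collProbH d θ H := by
    intro θ hθ
    rw [Pform θ]
    calc (1:ℝ)/2 = ∑ k ∈ Finset.range (d+1), w k * (1/2) := by
          rw [← Finset.sum_mul, wsum, one_mul]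
      _ ≤ _ := Finset.sum_le_sum fun k _ => mul_le_mul_of_nonneg_left
          (by have := pow_nonneg hθ k; linarith) (wnonneg k)
  set P := collProbH d β H with hP
  set Q := collProbH d α H with hQdef
  have hPhalf : 1/2 ≤ P := Pge β hβ
  have hQhalf : 1/2 ≤ Q := Pge α hα0.le
  have hPpos : 0 < P := by linarith
  have hQpos : 0 < Q := by linarith
  have hFβpos : 0 < Real.log (2/(1+β)) := Flog_pos hβ (lt_trans hβα hα)
  have hFαpos : 0 < Real.log (2/(1+α)) := Flog_pos hα0.le hα
  have hcpos : 0 < c := div_pos hFαpos hFβpos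
  have hclt1 : c < 1 := by
    rw [hc, div_lt_one hFβpos]
    apply Real.log_lt_log (by positivity)
    apply div_lt_div_of_pos_left (by norm_num) (by linarith) (by linarith)
  have hQP : Q = P ^ c := by
    have h1 : Real.log (1/P) ≠ 0 := by
      rw [one_div, Real.log_inv]
      have := Real.log_neg hPpos hpβ
      linarith
    rw [div_eq_iff h1] at hopt
    have h2 : Real.log Q = c * Real.log P := by
      rw [one_div, one_div, Real.log_inv, Real.log_inv] at hopt
      linear_combination -hopt
    rw [Real.rpow_def_of_pos hPpos, mul_comm, ← h2, Real.exp_log hQpos]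
  -- tangent line bounds
  set τ : ℕ → ℝ := fun k => P^c * (1 + c * ((1+β^k)/2 / P - 1)) with hτ
  have hPcpos : 0 < P ^ c := Real.rpow_pos_of_pos hPpos c
  have bpos : ∀ k : ℕ, (0:ℝ) < (1+β^k)/2 := by
    intro k; have := pow_nonneg hβ k; linarith
  have rpow_split : ∀ k : ℕ, ((1+β^k)/2 / P) ^ c * P ^ c = ((1+β^k)/2 : ℝ) ^ c := by
    intro k
    rw [Real.div_rpow (bpos k).le hPpos.le, div_mul_cancel₀ _ (ne_of_gt hPcpos)]
  have hs_ge : ∀ k : ℕ, (-1:ℝ) ≤ (1+β^k)/2 / P - 1 := by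
    intro k
    have : (0:ℝ) ≤ (1+β^k)/2 / P := le_of_lt (div_pos (bpos k) hPpos)
    linarith
  have tangent_le : ∀ k : ℕ, ((1+β^k)/2 : ℝ) ^ c ≤ τ k := by
    intro k
    rw [← rpow_split k, hτ]
    have hb := rpow_one_add_le_one_add_mul_self (hs_ge k) hcpos.le hclt1.le
    simp only [add_sub_cancel] at hb
    calc ((1+β^k)/2 / P) ^ c * P ^ c
        ≤ (1 + c * ((1+β^k)/2 / P - 1)) * P ^ c := by
          apply mul_le_mul_of_nonneg_right ?_ hPcpos.le
          convert hb using 2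
      _ = P^c * (1 + c * ((1+β^k)/2 / P - 1)) := by ring
  have tangent_lt : ∀ k : ℕ, ((1+β^k)/2 : ℝ) ≠ P → ((1+β^k)/2 : ℝ) ^ c < τ k := by
    intro k hne
    rw [← rpow_split k, hτ]
    have hsne : (1+β^k)/2 / P - 1 ≠ 0 := by
      intro hzero
      apply hne
      have : (1+β^k)/2 / P = 1 := by linarith
      field_simp at this
      linarith
    have hb := rpow_one_add_lt_one_add_mul_self (hs_ge k) hsne hcpos hclt1
    simp only [add_sub_cancel] at hb
    calc ((1+β^k)/2 / P) ^ c * P ^ c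
        < (1 + c * ((1+β^k)/2 / P - 1)) * P ^ c := by
          apply mul_lt_mul_of_pos_right ?_ hPcpos
          convert hb using 2
      _ = P^c * (1 + c * ((1+β^k)/2 / P - 1)) := by ring
  have sum_tau : ∑ k ∈ Finset.range (d+1), w k * τ k = P ^ c := by
    have hPb : ∑ k ∈ Finset.range (d+1), w k * ((1+β^k)/2) = P := (Pform β).symm
    have expand : ∀ k : ℕ, w k * τ k
        = w k * (P^c * (1-c)) + (c * P^c / P) * (w k * ((1+β^k)/2)) := by
      intro k
      rw [hτ]
      field_simp
      ring
    rw [Finset.sum_congr rfl fun k _ => expand k, Finset.sum_add_distrib,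
      ← Finset.sum_mul, wsum, ← Finset.mul_sum, hPb, one_mul]
    field_simp
    ring
  have hQsum : ∑ k ∈ Finset.range (d+1), w k * ((1+α^k)/2) = Q := (Pform α).symm
  have term_le : ∀ k : ℕ, ((1+α^k)/2 : ℝ) ≤ τ k :=
    fun k => le_trans (pt_le k hβ hβα hα) (tangent_le k)
  have sum_zero : ∑ k ∈ Finset.range (d+1), w k * (τ k - (1+α^k)/2) = 0 := by
    rw [Finset.sum_congr rfl (fun k _ =>
      show w k * (τ k - (1+α^k)/2) = w k * τ k - w k * ((1+α^k)/2) by ring)]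
    rw [Finset.sum_sub_distrib, sum_tau, hQsum, hQP, sub_self]
  have each_zero : ∀ k ∈ Finset.range (d+1), w k * (τ k - (1+α^k)/2) = 0 :=
    (Finset.sum_eq_zero_iff_of_nonneg (fun k _ => mul_nonneg (wnonneg k)
      (by linarith [term_le k]))).1 sum_zero
  have hw0 : w 0 = 0 := by
    have h0 : (0:ℕ) ∈ Finset.range (d+1) := Finset.mem_range.2 (by omega)
    have hz := each_zero 0 h0
    have hne : ((1+β^0)/2 : ℝ) ≠ P := by
      norm_num
      linarith
    have hlt : ((1+α^0)/2 : ℝ) < τ 0 :=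
      lt_of_le_of_lt (pt_le 0 hβ hβα hα) (tangent_lt 0 hne)
    rcases mul_eq_zero.1 hz with h | h
    · exact h
    · exfalso; linarith
  have hwk2 : ∀ k, 2 ≤ k → k ∈ Finset.range (d+1) → w k = 0 := by
    intro k hk hkr
    have hz := each_zero k hkr
    have hlt : ((1+α^k)/2 : ℝ) < τ k :=
      lt_of_lt_of_le (pt_lt hk hβ hβα hα) (tangent_le k)
    rcases mul_eq_zero.1 hz with h | h
    · exact h
    · exfalso; linarith
  intro g hg
  have hvanW : ∀ k, k ∈ Finset.range (d+1) → k ≠ 1 →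
      cubeFourierWeight d (fun x => signVal (g x)) k = 0 := by
    intro k hkr hk1
    have hwk0 : w k = 0 := by
      match k with
      | 0 => exact hw0
      | 1 => exact absurd rfl hk1
      | (n+2) => exact hwk2 (n+2) (by omega) hkr
    have hterm := (Finset.sum_eq_zero_iff_of_nonneg (fun g' _ =>
      mul_nonneg (Hnonneg g') (weight_nonneg g' k))).1 hwk0 g (Finset.mem_univ g)
    rcases mul_eq_zero.1 hterm with h | h
    · exact absurd h hg
    · exact h
  apply dictator_of_level_one
  intro S hS
  have hcard : S.card ∈ Finset.range (d+1) := Finset.mem_range.2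
    (Nat.lt_succ_of_le (le_trans (Finset.card_le_univ S) (by simp)))
  have hWzero := hvanW S.card hcard hS
  have hcoeff := (Finset.sum_eq_zero_iff_of_nonneg (fun T _ => sq_nonneg _)).1 hWzero S
    (Finset.mem_filter.2 ⟨Finset.mem_univ S, rfl⟩)
  exact pow_eq_zero_iff two_ne_zero |>.1 hcoeff
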